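/- For every u ∈ U₀, the finite harmonic function φ_u is multiplicative: Σ_γ c^γ_{α,β}·φ_u(γ) = φ_u(α)·φ_u(β) for all compositions α and β (hence φ_u is an indecomposable finite harmonic function on GK). -/

import Mathlib

open scoped ENNReal NNReal

namespace GK

/-! ## The Gnedin–Kingman graph -/

/-- Decrement (if the part is ≥ 2) or delete (otherwise) the part of `μ` at position `p`. -/
def stepAt (μ : List ℕ) (p : ℕ) : List ℕ :=
  if 2 ≤ μ.getD p 0 then μ.set p (μ.getD p 0 - 1) else μ.eraseIdx p

/-- Edge multiplicity `κ(ν,μ)` of the Gnedin–Kingman graph: the number of positions of `μ`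
at which decrementing a part ≥ 2 (or deleting a part equal to 1) produces `ν`. -/
def kappa (ν μ : List ℕ) : ℕ :=
  ((Finset.range μ.length).filter fun p => stepAt μ p = ν).card

/-- `ν ↗ μ`. -/
def Rel (ν μ : List ℕ) : Prop := 0 < kappa ν μ

def IsComposition (l : List ℕ) : Prop := ∀ n ∈ l, 0 < n

/-- Compositions: finite lists of positive integers. -/
abbrev Comp := {l : List ℕ // IsComposition l}

/-- The empty composition ∅. -/
def cEmpty : Comp := ⟨[], fun _ h => nomatch h⟩

/-- Harmonicity, for `[0,∞]`-valued functions on the Gnedin–Kingman graph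
(with the conventions `0·∞ = 0` and `x + ∞ = ∞` of `ℝ≥0∞`). -/
def HarmonicE (φ : Comp → ℝ≥0∞) : Prop :=
  ∀ l : Comp, φ l = ∑' μ : Comp, (kappa l.1 μ.1 : ℝ≥0∞) * φ μ

/-- Harmonicity, for real-valued functions. -/
def HarmonicR (φ : Comp → ℝ) : Prop :=
  ∀ l : Comp, φ l = ∑' μ : Comp, (kappa l.1 μ.1 : ℝ) * φ μ

/-- A finite harmonic function: real-valued (hence finite), nonnegative, harmonic. -/
def FiniteHarmonic (φ : Comp → ℝ) : Prop :=
  HarmonicR φ ∧ ∀ l, 0 ≤ φ l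

/-- The quasi-shuffle coefficient `c^γ_{α,β}`: the number of pairs of strictly increasing
maps `f, g` into the positions of `γ` which jointly cover all positions of `γ` and such that
each part of `γ` is the sum of the corresponding parts of `α` and `β`. -/
noncomputable def qsCoeff (α β γ : List ℕ) : ℕ :=
  Nat.card {fg : (Fin α.length → Fin γ.length) × (Fin β.length → Fin γ.length) //
    StrictMono fg.1 ∧ StrictMono fg.2 ∧
    (∀ s, (∃ i, fg.1 i = s) ∨ (∃ j, fg.2 j = s)) ∧
    ∀ s : Fin γ.length,
      γ.get s = (∑ i, if fg.1 i = s then α.get i else 0) +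
                (∑ j, if fg.2 j = s then β.get j else 0)}

/-- Indecomposability of a finite harmonic function normalized at ∅. -/
def IndecFin (φ : Comp → ℝ) : Prop :=
  ∀ φ₁ φ₂ : Comp → ℝ, FiniteHarmonic φ₁ → FiniteHarmonic φ₂ →
    φ₁ cEmpty = 1 → φ₂ cEmpty = 1 →
    ∀ c₁ c₂ : ℝ, 0 < c₁ → 0 < c₂ → c₁ + c₂ = 1 →
      (∀ l, φ l = c₁ * φ₁ l + c₂ * φ₂ l) → φ = φ₁ ∨ φ = φ₂

/-! ## Typed weight sequences, `M°_λ` and `U₀` -/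

/-- `M°_λ(v)` for a typed weight sequence `v` (`true` = h, `false` = v): the sum over all
decompositions of `λ` into consecutive (possibly empty) blocks, one for each entry of `v`,
where an h-block has at most one part and contributes `w^{|block|}`, and a v-block has all
parts equal to 1 and contributes `w^{ℓ}/ℓ!`. -/
noncomputable def Mcirc : List (ℝ × Bool) → List ℕ → ℝ
  | [], l => if l = [] then 1 else 0
  | (w, t) :: v, l =>
      ∑ i ∈ Finset.range (l.length + 1),
        (if t then (if (l.take i).length ≤ 1 then w ^ (l.take i).sum else 0)
         else if ∀ n ∈ l.take i, n = 1 then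
           w ^ (l.take i).length / ((l.take i).length.factorial : ℝ)
         else 0) * Mcirc v (l.drop i)

/-- Membership in `U₀`: positive weights of total sum 1, no two consecutive v's. -/
def memU0 (u : List (ℝ × Bool)) : Prop :=
  (∀ p ∈ u, 0 < p.1) ∧ (u.map Prod.fst).sum = 1 ∧
    List.Chain' (fun p q => p.2 = true ∨ q.2 = true) u

/-- `t_n(u)`: replace each h-interval by a part `n` and each v-interval by `n` ones. -/
def tnU (u : List (ℝ × Bool)) (n : ℕ) : List ℕ :=
  (u.map fun p => if p.2 then [n] else List.replicate n 1).flatten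

/-- Merge each maximal run of consecutive v-intervals into a single v-interval,
summing the weights. -/
def mergeV : List (ℝ × Bool) → List (ℝ × Bool)
  | [] => []
  | (w, true) :: rest => (w, true) :: mergeV rest
  | (w, false) :: rest =>
      match mergeV rest with
      | (w', false) :: rest' => (w + w', false) :: rest'
      | r => (w, false) :: r

/-! ## The set `Ũ₀` and the functions `φ_ũ` -/

/-- An element of `Ũ₀`. `t i = true` means type h, `false` means type v; `sep i` are the
separating compositions λ₀, …, λ_m. Only `w i`, `t i` for `i < m` and `sep i` for `i ≤ m`
are relevant. -/
structure UTilde where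
  m : ℕ
  w : ℕ → ℝ
  t : ℕ → Bool
  sep : ℕ → List ℕ
  sep_pos : ∀ i, i ≤ m → ∀ n ∈ sep i, 0 < n
  sep_nonempty : ∃ i, i ≤ m ∧ sep i ≠ []
  w_pos : ∀ i, i < m → 0 < w i
  w_sum : ∑ i ∈ Finset.range m, w i = 1
  vv : ∀ i, i + 1 < m → t i = false → t (i + 1) = false → sep (i + 1) ≠ []
  v_left : ∀ i, i < m → t i = false → sep i ≠ [] → 2 ≤ (sep i).getLastD 0
  v_right : ∀ i, i < m → t i = false → sep (i + 1) ≠ [] → 2 ≤ (sep (i + 1)).headD 0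

namespace UTilde

variable (u : UTilde)

/-- `λ₀ ⊔ f 0 ⊔ λ₁ ⊔ … ⊔ f (m-1) ⊔ λ_m`. -/
def blocks (f : ℕ → List ℕ) : List ℕ :=
  u.sep 0 ++ (List.ofFn fun i : Fin u.m => f (i : ℕ) ++ u.sep ((i : ℕ) + 1)).flatten

/-- `t_n(ũ)`. -/
def tn (n : ℕ) : List ℕ :=
  u.blocks fun i => if u.t i then [n] else List.replicate n 1

/-- Membership in `GK_ũ`. -/
def GKmem (l : List ℕ) : Prop := ∃ n, 1 ≤ n ∧ Relation.ReflTransGen Rel l (u.tn n)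

/-- Position `i` (of type h) is adjacent to a v-interval. -/
def adj (i : ℕ) : Prop :=
  (0 < i ∧ u.t (i - 1) = false ∧ u.sep i = []) ∨
  (i + 1 < u.m ∧ u.t (i + 1) = false ∧ u.sep (i + 1) = [])

instance (i : ℕ) : Decidable (u.adj i) := by unfold adj; infer_instance

def d (i : ℕ) : ℕ := if u.adj i then 2 else 1

/-- `λ(a,b)`, where `c` encodes both vectors: `a i = c i` on h-positions and
`b i = c i` on v-positions. -/
def lam (c : ℕ → ℕ) : List ℕ :=
  u.blocks fun i => if u.t i then [u.d i + c i] else List.replicate (c i) 1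

/-- `λ_ũ = λ(0,0)`. -/
def lam0 : List ℕ := u.lam fun _ => 0

/-- `Π_{i : t_i = h} w_i^{a_i} · Π_{i : t_i = v} w_i^{b_i}/b_i!`. -/
noncomputable def phiVal (c : ℕ → ℕ) : ℝ≥0∞ :=
  ∏ i ∈ Finset.range u.m,
    if u.t i then ENNReal.ofReal (u.w i) ^ c i
    else ENNReal.ofReal (u.w i) ^ c i / ((c i).factorial : ℝ≥0∞)

open Classical in
/-- The semifinite harmonic function `φ_ũ`. -/
noncomputable def phi (l : List ℕ) : ℝ≥0∞ :=
  if h : ∃ c : ℕ → ℕ, l = u.lam c then u.phiVal h.choose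
  else if u.GKmem l then ⊤ else 0

/-- `u^ε(ũ)`: each part of each separating composition is replaced by an h-interval
of length `ε`. -/
def uEps (ε : ℝ) : List (ℝ × Bool) :=
  ((u.sep 0).map fun _ => (ε, true)) ++
    (List.ofFn fun i : Fin u.m =>
      (u.w (i : ℕ), u.t (i : ℕ)) :: ((u.sep ((i : ℕ) + 1)).map fun _ => (ε, true))).flatten

/-- `n(ũ) = |λ₀| + … + |λ_m|`. -/
def nU : ℕ := ∑ i ∈ Finset.range (u.m + 1), (u.sep i).sum

/-- The list of intervals of `ũ` (separating compositions dropped). -/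
def ubarList : List (ℝ × Bool) := List.ofFn fun i : Fin u.m => (u.w (i : ℕ), u.t (i : ℕ))

end UTilde

/-! ## The cone `K` and the maps `F_φ` -/

/-- `V`: finitely supported real functions on compositions. -/
abbrev V := Comp →₀ ℝ

/-- `W`: span of the vectors `e_λ − Σ_μ κ(λ,μ)·e_μ`. -/
noncomputable def Wsub : Submodule ℝ V :=
  Submodule.span ℝ
    {x : V | ∃ l : Comp, ∀ μ : Comp, x μ = (if μ = l then 1 else 0) - (kappa l.1 μ.1 : ℝ)}

/-- `R = V/W`. -/
abbrev Rq := V ⧸ Wsub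

/-- The cone `K ⊆ R`: classes of nonnegative vectors. -/
def Kcone : Set Rq :=
  {a | ∃ x : V, (∀ μ, 0 ≤ x μ) ∧ Submodule.Quotient.mk x = a}

/-- `Σ_λ x(λ)·φ(λ)` for a representative `x`. -/
noncomputable def FphiV (φ : Comp → ℝ≥0∞) (x : V) : ℝ≥0∞ :=
  ∑' μ : Comp, ENNReal.ofReal (x μ) * φ μ

open Classical in
/-- `F_φ : K → [0,∞]` (defined via a choice of nonnegative representative; for harmonic `φ`
it is well defined). Outside `K` we set it to `0`. -/
noncomputable def Fphi (φ : Comp → ℝ≥0∞) (a : Rq) : ℝ≥0∞ :=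
  if h : a ∈ Kcone then FphiV φ h.choose else 0

/-- Semifiniteness: not finite, and `F_φ` is determined by its finite values from below. -/
def Semifinite (φ : Comp → ℝ≥0∞) : Prop :=
  (¬ ∀ l, φ l < ⊤) ∧
    ∀ a ∈ Kcone, Fphi φ a =
      sSup {y | ∃ b ∈ Kcone, a - b ∈ Kcone ∧ Fphi φ b < ⊤ ∧ y = Fphi φ b}

/-- Indecomposability of a semifinite harmonic function. -/
def IndecSemifinite (φ : Comp → ℝ≥0∞) : Prop :=
  ∀ ψ : Comp → ℝ≥0∞, HarmonicE ψ →
    (((∀ l, ψ l < ⊤) ∧ ψ ≠ 0) ∨ Semifinite ψ) →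
    (∀ a ∈ Kcone, Fphi ψ a ≤ Fphi φ a) →
    ∃ c : ℝ≥0, ∀ l, ψ l = (c : ℝ≥0∞) * φ l

end GK

namespace GK
/-! ### Auxiliary: the quasi-shuffle operator `Q` -/

/-- `Q x y F = Σ_γ c^γ_{x,y} F γ`, defined recursively. -/
noncomputable def Qop : List ℕ → List ℕ → (List ℕ → ℝ) → ℝ
  | [], y, F => F y
  | x, [], F => F x
  | a::A, b::B, F =>
      Qop A (b::B) (fun γ => F (a::γ)) + Qop (a::A) B (fun γ => F (b::γ)) +
        Qop A B (fun γ => F ((a+b)::γ))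
  termination_by x y _ => x.length + y.length
  decreasing_by all_goals (simp; try omega)

@[simp] lemma Qop_nil_left (y : List ℕ) (F : List ℕ → ℝ) : Qop [] y F = F y := by
  cases y <;> simp [Qop]

@[simp] lemma Qop_cons_nil (a : ℕ) (A : List ℕ) (F : List ℕ → ℝ) :
    Qop (a::A) [] F = F (a::A) := by simp [Qop]

lemma Qop_cons_cons (a b : ℕ) (A B : List ℕ) (F : List ℕ → ℝ) :
    Qop (a::A) (b::B) F = Qop A (b::B) (fun γ => F (a::γ)) + Qop (a::A) B (fun γ => F (b::γ)) +
        Qop A B (fun γ => F ((a+b)::γ)) := by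
  simp [Qop]

lemma Qop_congr {x y : List ℕ} {F G : List ℕ → ℝ} (h : ∀ γ, F γ = G γ) :
    Qop x y F = Qop x y G := by
  exact congrArg (Qop x y) (funext h)

lemma Qop_zero (x y : List ℕ) : Qop x y (fun _ => (0:ℝ)) = 0 := by
  match x, y with
  | [], y => simp
  | a::A, [] => simp
  | a::A, b::B => rw [Qop_cons_cons]; rw [Qop_zero, Qop_zero, Qop_zero]; ring
  termination_by x.length + y.length
  decreasing_by all_goals (simp; try omega)

lemma Qop_add (x y : List ℕ) (F G : List ℕ → ℝ) :
    Qop x y (fun γ => F γ + G γ) = Qop x y F + Qop x y G := by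
  match x, y with
  | [], y => simp
  | a::A, [] => simp
  | a::A, b::B =>
      rw [Qop_cons_cons, Qop_cons_cons (F := F), Qop_cons_cons (F := G)]
      rw [Qop_add, Qop_add, Qop_add]; ring
  termination_by x.length + y.length
  decreasing_by all_goals (simp; try omega)

lemma Qop_smul (x y : List ℕ) (c : ℝ) (F : List ℕ → ℝ) :
    Qop x y (fun γ => c * F γ) = c * Qop x y F := by
  match x, y with
  | [], y => simp
  | a::A, [] => simp
  | a::A, b::B =>
      rw [Qop_cons_cons, Qop_cons_cons (F := F)]
      rw [Qop_smul, Qop_smul, Qop_smul]; ring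
  termination_by x.length + y.length
  decreasing_by all_goals (simp; try omega)

lemma Qop_ind (x y : List ℕ) :
    Qop x y (fun l => if l = [] then (1:ℝ) else 0) =
      (if x = [] then (1:ℝ) else 0) * (if y = [] then (1:ℝ) else 0) := by
  match x, y with
  | [], y => simp
  | a::A, [] => simp
  | a::A, b::B =>
      have h1 : Qop A (b::B) (fun γ => if a::γ = [] then (1:ℝ) else 0) = 0 := by
        rw [Qop_congr (G := fun _ => (0:ℝ)) (fun γ => by simp)]; exact Qop_zero _ _
      have h2 : Qop (a::A) B (fun γ => if b::γ = [] then (1:ℝ) else 0) = 0 := by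
        rw [Qop_congr (G := fun _ => (0:ℝ)) (fun γ => by simp)]; exact Qop_zero _ _
      have h3 : Qop A B (fun γ => if (a+b)::γ = [] then (1:ℝ) else 0) = 0 := by
        rw [Qop_congr (G := fun _ => (0:ℝ)) (fun γ => by simp)]; exact Qop_zero _ _
      rw [Qop_cons_cons, h1, h2, h3]
      simp
lemma Qop_nil_right (z : List ℕ) (F : List ℕ → ℝ) : Qop z [] F = F z := by
  cases z <;> simp

lemma Qop_conv (x y : List ℕ) (G H : List ℕ → ℝ) :
    Qop x y (fun γ => ∑ k ∈ Finset.range (γ.length+1), G (γ.take k) * H (γ.drop k)) =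
      ∑ i ∈ Finset.range (x.length+1), ∑ j ∈ Finset.range (y.length+1),
        Qop (x.take i) (y.take j) G * Qop (x.drop i) (y.drop j) H := by
  match x, y with
  | [], y => simp
  | a::A, [] => simp [Qop_nil_right]
  | a::A, b::B =>
    have key : ∀ (d : ℕ) (X Y : List ℕ),
        Qop X Y (fun γ => ∑ k ∈ Finset.range ((d::γ).length+1),
            G ((d::γ).take k) * H ((d::γ).drop k))
        = Qop X Y (fun γ => ∑ k ∈ Finset.range (γ.length+1), G (d :: γ.take k) * H (γ.drop k))
          + G [] * Qop X Y (fun γ => H (d::γ)) := by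
      intro d X Y
      have e : (fun γ => ∑ k ∈ Finset.range ((d::γ).length+1),
            G ((d::γ).take k) * H ((d::γ).drop k))
          = (fun γ => (∑ k ∈ Finset.range (γ.length+1), G (d :: γ.take k) * H (γ.drop k))
              + G [] * H (d::γ)) := by
        funext γ
        rw [show (d::γ).length + 1 = γ.length + 1 + 1 from rfl, Finset.sum_range_succ']
        simp
      rw [e, Qop_add, Qop_smul]
    rw [Qop_cons_cons]
    rw [key a, key b, key (a+b)]
    have h1 : (Qop A (b::B) fun γ => ∑ k ∈ Finset.range (γ.length+1),
          G (a :: γ.take k) * H (γ.drop k))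
        = ∑ i ∈ Finset.range (A.length+1), ∑ j ∈ Finset.range ((b::B).length+1),
            Qop (A.take i) ((b::B).take j) (fun p => G (a::p)) *
              Qop (A.drop i) ((b::B).drop j) H :=
      Qop_conv A (b::B) (fun p => G (a::p)) H
    have h2 : (Qop (a::A) B fun γ => ∑ k ∈ Finset.range (γ.length+1),
          G (b :: γ.take k) * H (γ.drop k))
        = ∑ i ∈ Finset.range ((a::A).length+1), ∑ j ∈ Finset.range (B.length+1),
            Qop ((a::A).take i) (B.take j) (fun p => G (b::p)) *
              Qop ((a::A).drop i) (B.drop j) H :=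
      Qop_conv (a::A) B (fun p => G (b::p)) H
    have h3 : (Qop A B fun γ => ∑ k ∈ Finset.range (γ.length+1),
          G ((a+b) :: γ.take k) * H (γ.drop k))
        = ∑ i ∈ Finset.range (A.length+1), ∑ j ∈ Finset.range (B.length+1),
            Qop (A.take i) (B.take j) (fun p => G ((a+b)::p)) *
              Qop (A.drop i) (B.drop j) H :=
      Qop_conv A B (fun p => G ((a+b)::p)) H
    rw [h1, h2, h3]
    simp only [List.length_cons]
    -- peel the inner sum of the h1-piece
    have pS1 : ∀ i : ℕ, (∑ j ∈ Finset.range (B.length+1+1),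
          Qop (A.take i) ((b::B).take j) (fun p => G (a::p)) * Qop (A.drop i) ((b::B).drop j) H)
        = (∑ j ∈ Finset.range (B.length+1),
            Qop (A.take i) (b :: B.take j) (fun p => G (a::p)) * Qop (A.drop i) (B.drop j) H)
          + G (a :: A.take i) * Qop (A.drop i) (b::B) H := by
      intro i
      rw [Finset.sum_range_succ']
      simp [Qop_nil_right]
    simp only [pS1]
    -- peel the outer sum of the h2-piece
    rw [Finset.sum_range_succ' (fun i => ∑ j ∈ Finset.range (B.length+1),
        Qop ((a::A).take i) (B.take j) (fun p => G (b::p)) *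
          Qop ((a::A).drop i) (B.drop j) H) (A.length+1)]
    -- peel the RHS : inner sums pointwise, then split, then outer peels
    have pR : ∀ i : ℕ, (∑ j ∈ Finset.range (B.length+1+1),
          Qop ((a::A).take i) ((b::B).take j) G * Qop ((a::A).drop i) ((b::B).drop j) H)
        = (∑ j ∈ Finset.range (B.length+1),
            Qop ((a::A).take i) (b :: B.take j) G * Qop ((a::A).drop i) (B.drop j) H)
          + G ((a::A).take i) * Qop ((a::A).drop i) (b::B) H := by
      intro i
      rw [Finset.sum_range_succ']
      simp [Qop_nil_right]
    simp only [pR]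
    simp only [Finset.sum_add_distrib]
    rw [Finset.sum_range_succ' (fun i => ∑ j ∈ Finset.range (B.length+1),
        Qop ((a::A).take i) (b :: B.take j) G * Qop ((a::A).drop i) (B.drop j) H) (A.length+1)]
    rw [Finset.sum_range_succ' (fun i =>
        G ((a::A).take i) * Qop ((a::A).drop i) (b::B) H) (A.length+1)]
    simp only [List.take_succ_cons, List.drop_succ_cons, List.take_zero, List.drop_zero,
      Qop_nil_left, Qop_nil_right, Qop_cons_cons, add_mul, Finset.sum_add_distrib]
    ring
/-- The weight of the first block for interval `(w,t)`. -/
noncomputable def blockWt (w : ℝ) (t : Bool) (p : List ℕ) : ℝ :=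
  if t then (if p.length ≤ 1 then w ^ p.sum else 0)
  else if ∀ n ∈ p, n = 1 then w ^ p.length / (p.length.factorial : ℝ) else 0

lemma Mcirc_cons (w : ℝ) (t : Bool) (v : List (ℝ × Bool)) (l : List ℕ) :
    Mcirc ((w,t)::v) l
      = ∑ i ∈ Finset.range (l.length + 1), blockWt w t (l.take i) * Mcirc v (l.drop i) := rfl

lemma Qop_blockWt_h (w : ℝ) (x y : List ℕ) :
    Qop x y (blockWt w true) = blockWt w true x * blockWt w true y := by
  have hb : ∀ p : List ℕ, blockWt w true p = if p.length ≤ 1 then w ^ p.sum else 0 :=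
    fun p => rfl
  match x, y with
  | [], y => simp [hb]
  | a::A, [] => simp [Qop_nil_right, hb]
  | a::A, b::B =>
    rw [Qop_cons_cons]
    have e : ∀ d : ℕ, (fun γ => blockWt w true (d::γ))
        = fun γ : List ℕ => w ^ d * (if γ = [] then (1:ℝ) else 0) := by
      intro d; funext γ
      rcases γ with _ | ⟨c, γ⟩ <;> simp [hb]
    rw [e a, e b, e (a+b)]
    rw [Qop_smul, Qop_smul, Qop_smul, Qop_ind, Qop_ind, Qop_ind]
    by_cases hA : A = [] <;> by_cases hB : B = [] <;>
      simp [hA, hB, hb, pow_add, List.length_eq_zero_iff]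

/-- `Nv w m l`, the `v`-type weight with `m` parts already placed. -/
noncomputable def Nv (w : ℝ) (m : ℕ) (l : List ℕ) : ℝ :=
  if ∀ n ∈ l, n = 1 then w ^ l.length / ((l.length + m).factorial : ℝ) else 0

lemma Qop_Nv (w : ℝ) (x y : List ℕ) (hx : ∀ n ∈ x, 0 < n) (hy : ∀ n ∈ y, 0 < n) (m : ℕ) :
    Qop x y (Nv w m)
      = if (∀ n ∈ x, n = 1) ∧ (∀ n ∈ y, n = 1) then
          ((x.length + y.length).choose x.length : ℝ) * w ^ (x.length + y.length)
            / ((x.length + y.length + m).factorial : ℝ)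
        else 0 := by
  match x, y with
  | [], y => simp [Nv]
  | a::A, [] =>
    rw [Qop_nil_right]
    simp [Nv]
  | a::A, b::B =>
    have ha : 0 < a := hx a (by simp)
    have hb : 0 < b := hy b (by simp)
    have hA : ∀ n ∈ A, 0 < n := fun n hn => hx n (by simp [hn])
    have hB : ∀ n ∈ B, 0 < n := fun n hn => hy n (by simp [hn])
    rw [Qop_cons_cons]
    have e : ∀ d : ℕ, (fun γ => Nv w m (d::γ))
        = fun γ : List ℕ => (if d = 1 then (1:ℝ) else 0) * (w * Nv w (m+1) γ) := by
      intro d; funext γ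
      simp only [Nv, List.forall_mem_cons, List.length_cons]
      by_cases hd : d = 1
      · subst hd
        simp only [true_and, if_true]
        by_cases hγ : ∀ n ∈ γ, n = 1
        · rw [if_pos hγ, if_pos hγ,
            show γ.length + 1 + m = γ.length + (m+1) from by omega, pow_succ]
          ring
        · simp [hγ]
      · simp [hd]
    rw [e a, e b, e (a+b)]
    have hab : a + b ≠ 1 := by omega
    rw [if_neg hab]
    simp only [zero_mul]
    rw [Qop_zero]
    rw [Qop_smul, Qop_smul, Qop_smul, Qop_smul]
    rw [Qop_Nv w A (b::B) hA hy (m+1), Qop_Nv w (a::A) B hx hB (m+1)]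
    simp only [List.forall_mem_cons, List.length_cons]
    have key2 : ∀ p q : ℕ,
        w * (((p + (q+1)).choose p : ℝ) * w ^ (p + (q+1)) / ((p + (q+1) + (m+1)).factorial : ℝ))
          + w * (((p+1+q).choose (p+1) : ℝ) * w ^ (p+1+q) / ((p+1+q+(m+1)).factorial : ℝ))
        = ((p+1+(q+1)).choose (p+1) : ℝ) * w ^ (p+1+(q+1))
            / ((p+1+(q+1)+m).factorial : ℝ) := by
      intro p q
      rw [show p + (q+1) = p+q+1 from by omega, show p+1+q = p+q+1 from by omega,
          show p+q+1+(m+1) = p+q+1+1+m from by omega,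
          show p+1+(q+1) = p+q+1+1 from by omega]
      have hch : (p+q+1+1).choose (p+1) = (p+q+1).choose p + (p+q+1).choose (p+1) :=
        Nat.choose_succ_succ' (p+q+1) p
      rw [hch]
      push_cast
      rw [pow_succ]
      ring
    by_cases ha1 : a = 1
    · by_cases hb1 : b = 1
      · by_cases hA1 : ∀ n ∈ A, n = 1
        · by_cases hB1 : ∀ n ∈ B, n = 1
          · rw [if_pos ha1, if_pos hb1,
              if_pos (show (∀ n ∈ A, n = 1) ∧ b = 1 ∧ ∀ x ∈ B, x = 1 from ⟨hA1, hb1, hB1⟩),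
              if_pos (show (a = 1 ∧ ∀ n ∈ A, n = 1) ∧ ∀ x ∈ B, x = 1 from ⟨⟨ha1, hA1⟩, hB1⟩),
              if_pos (show (a = 1 ∧ ∀ n ∈ A, n = 1) ∧ b = 1 ∧ ∀ x ∈ B, x = 1 from
                ⟨⟨ha1, hA1⟩, hb1, hB1⟩),
              one_mul, one_mul, add_zero]
            exact key2 A.length B.length
          · simp [hB1]
        · simp [hA1]
      · simp [hb1]
    · simp [ha1]
  termination_by x.length + y.length
  decreasing_by all_goals (simp; try omega)
lemma blockWt_mult (w : ℝ) (t : Bool) (x y : List ℕ)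
    (hx : ∀ n ∈ x, 0 < n) (hy : ∀ n ∈ y, 0 < n) :
    Qop x y (blockWt w t) = blockWt w t x * blockWt w t y := by
  cases t
  · have hbv : blockWt w false = Nv w 0 := funext fun p => rfl
    rw [hbv, Qop_Nv w x y hx hy 0]
    unfold Nv
    by_cases hx1 : ∀ n ∈ x, n = 1
    · by_cases hy1 : ∀ n ∈ y, n = 1
      · rw [if_pos ⟨hx1, hy1⟩, if_pos hx1, if_pos hy1]
        simp only [Nat.add_zero]
        have hnat : (x.length + y.length).choose x.length * x.length.factorial
            * y.length.factorial = (x.length + y.length).factorial := by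
          have h := Nat.add_choose_mul_factorial_mul_factorial y.length x.length
          rw [add_comm y.length x.length] at h
          calc (x.length + y.length).choose x.length * x.length.factorial * y.length.factorial
              = (x.length + y.length).choose x.length * y.length.factorial
                  * x.length.factorial := by ring
            _ = _ := h
        have hcast : ((x.length + y.length).choose x.length : ℝ) * x.length.factorial
            * y.length.factorial = (x.length + y.length).factorial := by
          exact_mod_cast congrArg (Nat.cast : ℕ → ℝ) hnat
        rw [div_mul_div_comm, ← pow_add]
        rw [div_eq_div_iff (by positivity) (by positivity)]
        linear_combination w ^ (x.length + y.length) * hcast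
      · rw [if_neg (fun h => hy1 h.2), if_neg hy1, mul_zero]
    · rw [if_neg (fun h => hx1 h.1), if_neg hx1, zero_mul]
  · exact Qop_blockWt_h w x y

lemma Qop_Mcirc (u : List (ℝ × Bool)) : ∀ (x y : List ℕ),
    (∀ n ∈ x, 0 < n) → (∀ n ∈ y, 0 < n) →
    Qop x y (Mcirc u) = Mcirc u x * Mcirc u y := by
  induction u with
  | nil =>
    intro x y hx hy
    have h : Mcirc [] = fun l => if l = [] then (1:ℝ) else 0 := funext fun l => by
      cases l <;> rfl
    rw [h, Qop_ind]
  | cons p v ih =>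
    obtain ⟨w, t⟩ := p
    intro x y hx hy
    have h : Mcirc ((w,t)::v) = fun l => ∑ i ∈ Finset.range (l.length + 1),
        blockWt w t (l.take i) * Mcirc v (l.drop i) := funext fun l => Mcirc_cons w t v l
    rw [h]
    rw [Qop_conv]
    rw [Finset.sum_mul_sum]
    refine Finset.sum_congr rfl fun i _ => Finset.sum_congr rfl fun j _ => ?_
    rw [ih (x.drop i) (y.drop j)
        (fun n hn => hx n (List.drop_subset _ _ hn))
        (fun n hn => hy n (List.drop_subset _ _ hn)),
      blockWt_mult w t (x.take i) (y.take j)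
        (fun n hn => hx n (List.take_subset _ _ hn))
        (fun n hn => hy n (List.take_subset _ _ hn))]
    ring
/-- Recursive quasi-shuffle coefficient. -/
def qsc : List ℕ → List ℕ → List ℕ → ℕ
  | [], y, g => if g = y then 1 else 0
  | x, [], g => if g = x then 1 else 0
  | _::_, _::_, [] => 0
  | a::A, b::B, c::C =>
      (if c = a then qsc A (b::B) C else 0) + (if c = b then qsc (a::A) B C else 0) +
        (if c = a + b then qsc A B C else 0)
  termination_by x y _ => x.length + y.length
  decreasing_by all_goals (simp; try omega)

@[simp] lemma qsc_nil_left (y g : List ℕ) : qsc [] y g = if g = y then 1 else 0 := by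
  cases y <;> simp [qsc]

@[simp] lemma qsc_cons_nil (a : ℕ) (A g : List ℕ) :
    qsc (a::A) [] g = if g = a::A then 1 else 0 := by simp [qsc]

@[simp] lemma qsc_cons_cons_nil (a b : ℕ) (A B : List ℕ) : qsc (a::A) (b::B) [] = 0 := by
  simp [qsc]

lemma qsc_cons_cons (a b c : ℕ) (A B C : List ℕ) :
    qsc (a::A) (b::B) (c::C) =
      (if c = a then qsc A (b::B) C else 0) + (if c = b then qsc (a::A) B C else 0) +
        (if c = a + b then qsc A B C else 0) := by
  simp [qsc]

lemma qsc_sum_eq {x y g : List ℕ} (h : qsc x y g ≠ 0) : g.sum = x.sum + y.sum := by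
  match x, y, g with
  | [], y, g =>
    simp only [qsc_nil_left] at h
    split_ifs at h with hg
    · subst hg; simp
    · exact absurd rfl h
  | a::A, [], g =>
    simp only [qsc_cons_nil] at h
    split_ifs at h with hg
    · subst hg; simp
    · exact absurd rfl h
  | a::A, b::B, [] => simp at h
  | a::A, b::B, c::C =>
    rw [qsc_cons_cons] at h
    have : (c = a ∧ qsc A (b::B) C ≠ 0) ∨ (c = b ∧ qsc (a::A) B C ≠ 0) ∨
        (c = a + b ∧ qsc A B C ≠ 0) := by
      by_contra hcon
      push_neg at hcon
      obtain ⟨h1, h2, h3⟩ := hcon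
      have e1 : (if c = a then qsc A (b::B) C else 0) = 0 := by
        split_ifs with hc
        exacts [h1 hc, rfl]
      have e2 : (if c = b then qsc (a::A) B C else 0) = 0 := by
        split_ifs with hc
        exacts [h2 hc, rfl]
      have e3 : (if c = a + b then qsc A B C else 0) = 0 := by
        split_ifs with hc
        exacts [h3 hc, rfl]
      rw [e1, e2, e3] at h
      exact h rfl
    rcases this with ⟨rfl, h'⟩ | ⟨rfl, h'⟩ | ⟨rfl, h'⟩ <;>
      · have hs := qsc_sum_eq h'
        simp only [List.sum_cons] at hs ⊢
        omega
  termination_by x.length + y.length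
  decreasing_by all_goals (simp; try omega)

/-- Compositions with a given sum form a finite set. -/
lemma finite_comps (n : ℕ) : {γ : Comp | γ.1.sum = n}.Finite := by
  have : Finite {γ : Comp | γ.1.sum = n} := by
    refine Finite.of_injective
      (fun γ => (⟨γ.1.1, fun hi => γ.1.2 _ hi, γ.2⟩ : Composition n)) ?_
    intro γ δ h
    ext1
    ext1
    exact congrArg Composition.blocks h
  exact Set.toFinite _

lemma summable_aux {f : Comp → ℝ} {n : ℕ} (h : ∀ γ, f γ ≠ 0 → γ.1.sum = n) :
    Summable f := by
  refine summable_of_ne_finset_zero (s := (finite_comps n).toFinset) ?_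
  intro γ hγ
  by_contra hf
  exact hγ ((finite_comps n).mem_toFinset.mpr (h γ hf))

lemma tsum_qsc : ∀ (x y : List ℕ), (∀ n ∈ x, 0 < n) → (∀ n ∈ y, 0 < n) →
    ∀ F : List ℕ → ℝ,
    ∑' γ : Comp, (qsc x y γ.1 : ℝ) * F γ.1 = Qop x y F := by
  intro x y
  match x, y with
  | [], y =>
    intro _ hy F
    rw [tsum_eq_single (⟨y, hy⟩ : Comp) ?_]
    · simp
    · intro γ hγ
      have : γ.1 ≠ y := fun h => hγ (Subtype.ext h)
      simp [this]
  | a::A, [] =>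
    intro hx _ F
    rw [tsum_eq_single (⟨a::A, hx⟩ : Comp) ?_]
    · simp
    · intro γ hγ
      have : γ.1 ≠ a::A := fun h => hγ (Subtype.ext h)
      simp [this]
  | a::A, b::B =>
    intro hx hy F
    have ha : 0 < a := hx a (by simp)
    have hb : 0 < b := hy b (by simp)
    have hA : ∀ n ∈ A, 0 < n := fun n hn => hx n (by simp [hn])
    have hB : ∀ n ∈ B, 0 < n := fun n hn => hy n (by simp [hn])
    -- the three summands
    let f1 : Comp → ℝ := fun γ => match γ.1 with
      | [] => 0
      | c::C => (if c = a then (qsc A (b::B) C : ℝ) else 0) * F γ.1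
    let f2 : Comp → ℝ := fun γ => match γ.1 with
      | [] => 0
      | c::C => (if c = b then (qsc (a::A) B C : ℝ) else 0) * F γ.1
    let f3 : Comp → ℝ := fun γ => match γ.1 with
      | [] => 0
      | c::C => (if c = a + b then (qsc A B C : ℝ) else 0) * F γ.1
    have hsplit : ∀ γ : Comp, (qsc (a::A) (b::B) γ.1 : ℝ) * F γ.1 = f1 γ + f2 γ + f3 γ := by
      rintro ⟨l, hl⟩
      cases l with
      | nil => simp [f1, f2, f3]
      | cons c C =>
        show (qsc (a::A) (b::B) (c::C) : ℝ) * F (c::C) = _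
        rw [qsc_cons_cons]
        show _ = (if c = a then (qsc A (b::B) C : ℝ) else 0) * F (c::C)
          + (if c = b then (qsc (a::A) B C : ℝ) else 0) * F (c::C)
          + (if c = a + b then (qsc A B C : ℝ) else 0) * F (c::C)
        split_ifs <;> push_cast <;> ring
    have hsum1 : ∀ γ : Comp, f1 γ ≠ 0 → γ.1.sum = a + A.sum + (b + B.sum) := by
      rintro ⟨l, hl⟩ hne
      cases l with
      | nil => simp [f1] at hne
      | cons c C =>
        have : (if c = a then (qsc A (b::B) C : ℝ) else 0) ≠ 0 := by
          intro h0
          apply hne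
          show (if c = a then (qsc A (b::B) C : ℝ) else 0) * F (c::C) = 0
          rw [h0, zero_mul]
        split_ifs at this with hc
        · have hq : qsc A (b::B) C ≠ 0 := by exact_mod_cast this
          have := qsc_sum_eq hq
          show (c::C).sum = a + A.sum + (b + B.sum)
          simp only [List.sum_cons] at this ⊢
          omega
        · exact absurd rfl this
    have hsum2 : ∀ γ : Comp, f2 γ ≠ 0 → γ.1.sum = a + A.sum + (b + B.sum) := by
      rintro ⟨l, hl⟩ hne
      cases l with
      | nil => simp [f2] at hne
      | cons c C =>
        have : (if c = b then (qsc (a::A) B C : ℝ) else 0) ≠ 0 := by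
          intro h0
          apply hne
          show (if c = b then (qsc (a::A) B C : ℝ) else 0) * F (c::C) = 0
          rw [h0, zero_mul]
        split_ifs at this with hc
        · have hq : qsc (a::A) B C ≠ 0 := by exact_mod_cast this
          have := qsc_sum_eq hq
          show (c::C).sum = a + A.sum + (b + B.sum)
          simp only [List.sum_cons] at this ⊢
          omega
        · exact absurd rfl this
    have hsum3 : ∀ γ : Comp, f3 γ ≠ 0 → γ.1.sum = a + A.sum + (b + B.sum) := by
      rintro ⟨l, hl⟩ hne
      cases l with
      | nil => simp [f3] at hne
      | cons c C =>
        have : (if c = a + b then (qsc A B C : ℝ) else 0) ≠ 0 := by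
          intro h0
          apply hne
          show (if c = a + b then (qsc A B C : ℝ) else 0) * F (c::C) = 0
          rw [h0, zero_mul]
        split_ifs at this with hc
        · have hq : qsc A B C ≠ 0 := by exact_mod_cast this
          have := qsc_sum_eq hq
          show (c::C).sum = a + A.sum + (b + B.sum)
          simp only [List.sum_cons] at this ⊢
          omega
        · exact absurd rfl this
    have hS1 : Summable f1 := summable_aux hsum1
    have hS2 : Summable f2 := summable_aux hsum2
    have hS3 : Summable f3 := summable_aux hsum3
    calc ∑' γ : Comp, (qsc (a::A) (b::B) γ.1 : ℝ) * F γ.1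
        = ∑' γ : Comp, (f1 γ + f2 γ + f3 γ) := tsum_congr hsplit
      _ = (∑' γ, f1 γ) + (∑' γ, f2 γ) + (∑' γ, f3 γ) := by
          rw [Summable.tsum_add (hS1.add hS2) hS3, Summable.tsum_add hS1 hS2]
      _ = Qop A (b::B) (fun γ => F (a::γ)) + Qop (a::A) B (fun γ => F (b::γ)) +
            Qop A B (fun γ => F ((a+b)::γ)) := by
          congr 1
          · congr 1
            · -- f1
              have hinj : Function.Injective (fun δ : Comp =>
                  (⟨a :: δ.1, fun m hm => by
                    rcases List.mem_cons.mp hm with rfl | hm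
                    exacts [ha, δ.2 m hm]⟩ : Comp)) := by
                intro δ1 δ2 h
                apply Subtype.ext
                have := congrArg Subtype.val h
                simpa using this
              have hsupp : Function.support f1 ⊆ Set.range (fun δ : Comp =>
                  (⟨a :: δ.1, fun m hm => by
                    rcases List.mem_cons.mp hm with rfl | hm
                    exacts [ha, δ.2 m hm]⟩ : Comp)) := by
                rintro ⟨l, hl⟩ hne
                cases l with
                | nil => simp [f1] at hne
                | cons c C =>
                  have hc : c = a := by
                    by_contra hc
                    apply hne
                    show (if c = a then (qsc A (b::B) C : ℝ) else 0) * F (c::C) = 0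
                    rw [if_neg hc, zero_mul]
                  subst hc
                  exact ⟨⟨C, fun m hm => hl m (by simp [hm])⟩, Subtype.ext rfl⟩
              rw [← hinj.tsum_eq hsupp]
              refine Eq.trans (tsum_congr fun δ => ?_)
                (tsum_qsc A (b::B) hA hy (fun γ => F (a::γ)))
              show (if a = a then (qsc A (b::B) δ.1 : ℝ) else 0) * F (a :: δ.1)
                  = (qsc A (b::B) δ.1 : ℝ) * F (a :: δ.1)
              rw [if_pos rfl]
            · -- f2
              have hinj : Function.Injective (fun δ : Comp =>
                  (⟨b :: δ.1, fun m hm => by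
                    rcases List.mem_cons.mp hm with rfl | hm
                    exacts [hb, δ.2 m hm]⟩ : Comp)) := by
                intro δ1 δ2 h
                apply Subtype.ext
                have := congrArg Subtype.val h
                simpa using this
              have hsupp : Function.support f2 ⊆ Set.range (fun δ : Comp =>
                  (⟨b :: δ.1, fun m hm => by
                    rcases List.mem_cons.mp hm with rfl | hm
                    exacts [hb, δ.2 m hm]⟩ : Comp)) := by
                rintro ⟨l, hl⟩ hne
                cases l with
                | nil => simp [f2] at hne
                | cons c C =>
                  have hc : c = b := by
                    by_contra hc
                    apply hne
                    show (if c = b then (qsc (a::A) B C : ℝ) else 0) * F (c::C) = 0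
                    rw [if_neg hc, zero_mul]
                  subst hc
                  exact ⟨⟨C, fun m hm => hl m (by simp [hm])⟩, Subtype.ext rfl⟩
              rw [← hinj.tsum_eq hsupp]
              refine Eq.trans (tsum_congr fun δ => ?_)
                (tsum_qsc (a::A) B hx hB (fun γ => F (b::γ)))
              show (if b = b then (qsc (a::A) B δ.1 : ℝ) else 0) * F (b :: δ.1)
                  = (qsc (a::A) B δ.1 : ℝ) * F (b :: δ.1)
              rw [if_pos rfl]
          · -- f3
            have hinj : Function.Injective (fun δ : Comp =>
                (⟨(a+b) :: δ.1, fun m hm => by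
                  rcases List.mem_cons.mp hm with rfl | hm
                  exacts [by omega, δ.2 m hm]⟩ : Comp)) := by
              intro δ1 δ2 h
              apply Subtype.ext
              have := congrArg Subtype.val h
              simpa using this
            have hsupp : Function.support f3 ⊆ Set.range (fun δ : Comp =>
                (⟨(a+b) :: δ.1, fun m hm => by
                  rcases List.mem_cons.mp hm with rfl | hm
                  exacts [by omega, δ.2 m hm]⟩ : Comp)) := by
              rintro ⟨l, hl⟩ hne
              cases l with
              | nil => simp [f3] at hne
              | cons c C =>
                have hc : c = a + b := by
                  by_contra hc
                  apply hne
                  show (if c = a + b then (qsc A B C : ℝ) else 0) * F (c::C) = 0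
                  rw [if_neg hc, zero_mul]
                subst hc
                exact ⟨⟨C, fun m hm => hl m (by simp [hm])⟩, Subtype.ext rfl⟩
            rw [← hinj.tsum_eq hsupp]
            refine Eq.trans (tsum_congr fun δ => ?_)
              (tsum_qsc A B hA hB (fun γ => F ((a+b)::γ)))
            show (if a + b = a + b then (qsc A B δ.1 : ℝ) else 0) * F ((a+b) :: δ.1)
                = (qsc A B δ.1 : ℝ) * F ((a+b) :: δ.1)
            rw [if_pos rfl]
      _ = Qop (a::A) (b::B) F := (Qop_cons_cons a b A B F).symm
  termination_by x y => x.length + y.length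
  decreasing_by all_goals (simp; try omega)
/-! ### Bridge between `qsCoeff` and `qsc` -/

def QSP (x y g : List ℕ)
    (fg : (Fin x.length → Fin g.length) × (Fin y.length → Fin g.length)) : Prop :=
  StrictMono fg.1 ∧ StrictMono fg.2 ∧
    (∀ s, (∃ i, fg.1 i = s) ∨ (∃ j, fg.2 j = s)) ∧
    ∀ s : Fin g.length,
      g.get s = (∑ i, if fg.1 i = s then x.get i else 0) +
                (∑ j, if fg.2 j = s then y.get j else 0)

lemma qsCoeff_def (x y g : List ℕ) : qsCoeff x y g = Nat.card {fg // QSP x y g fg} := rfl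

lemma strictMono_id_fin {n : ℕ} {g : Fin n → Fin n} (h : StrictMono g) (i : Fin n) :
    g i = i := by
  have hb : Function.Bijective g := (Finite.injective_iff_bijective).mp h.injective
  have := (h.range_inj strictMono_id).mp
    (by rw [Set.range_id, Set.range_eq_univ]; exact hb.2)
  exact congrFun this i

lemma disjoint_pred {α : Type*} {p q : α → Prop} (h : ∀ a, p a → q a → False) :
    Disjoint p q := by
  rw [Pi.disjoint_iff]
  intro a
  intro x hxp hxq
  exact fun hx => (h a (hxp hx) (hxq hx)).elim

def qspSwap (x y g : List ℕ) : {fg // QSP x y g fg} ≃ {fg // QSP y x g fg} where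
  toFun z := ⟨(z.1.2, z.1.1), z.2.2.1, z.2.1, fun s => (z.2.2.2.1 s).symm,
    fun s => by rw [z.2.2.2.2 s]; ring⟩
  invFun z := ⟨(z.1.2, z.1.1), z.2.2.1, z.2.1, fun s => (z.2.2.2.1 s).symm,
    fun s => by rw [z.2.2.2.2 s]; ring⟩
  left_inv z := rfl
  right_inv z := rfl

lemma qsCoeff_comm (x y g : List ℕ) : qsCoeff x y g = qsCoeff y x g := by
  rw [qsCoeff_def, qsCoeff_def]
  exact Nat.card_congr (qspSwap x y g)

lemma qsCoeff_nil_left (y g : List ℕ) : qsCoeff [] y g = if g = y then 1 else 0 := by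
  rw [qsCoeff_def]
  haveI : IsEmpty (Fin ([] : List ℕ).length) := ⟨fun i => i.elim0⟩
  rcases eq_or_ne g y with rfl | hne
  · rw [if_pos rfl]
    rw [Nat.card_eq_one_iff_unique]
    constructor
    · constructor
      intro z1 z2
      apply Subtype.ext
      apply Prod.ext
      · funext i; exact i.elim0
      · funext j
        rw [strictMono_id_fin z1.2.2.1 j, strictMono_id_fin z2.2.2.1 j]
    · refine ⟨⟨(fun i => i.elim0, id), fun p => p.elim0, strictMono_id,
        fun s => Or.inr ⟨s, rfl⟩, fun s => ?_⟩⟩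
      rw [Finset.univ_eq_empty, Finset.sum_empty, zero_add]
      simp only [id_eq]
      rw [Finset.sum_ite_eq' Finset.univ s (fun j => g.get j), if_pos (Finset.mem_univ s)]
  · rw [if_neg hne]
    have : IsEmpty {fg // QSP [] y g fg} := by
      refine ⟨fun z => hne ?_⟩
      obtain ⟨⟨f, gm⟩, hmf, hmg, hcov, hsum⟩ := z
      have hsurj : Function.Surjective gm := by
        intro s
        rcases hcov s with ⟨i, _⟩ | h
        · exact i.elim0
        · exact h
      have hcard : g.length = y.length := by
        have h1 := Fintype.card_le_of_injective gm hmg.injective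
        have h2 := Fintype.card_le_of_surjective gm hsurj
        simp only [Fintype.card_fin] at h1 h2
        omega
      have hid : ∀ i : Fin g.length, gm (Fin.cast hcard i) = i := by
        have hsm : StrictMono (fun i : Fin g.length => gm (Fin.cast hcard i)) := by
          intro p q hpq
          apply hmg
          rw [Fin.lt_def] at hpq ⊢
          exact hpq
        intro i
        exact strictMono_id_fin hsm i
      apply List.ext_get hcard
      intro n h1 h2
      have hs := hsum ⟨n, h1⟩
      have hz : (∑ i : Fin ([] : List ℕ).length,
          if f i = ⟨n, h1⟩ then ([] : List ℕ).get i else 0) = 0 := by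
        simp [Finset.univ_eq_empty]
      rw [hz, zero_add] at hs
      rw [hs]
      rw [Finset.sum_eq_single (Fin.cast hcard ⟨n, h1⟩)]
      · rw [if_pos (hid ⟨n, h1⟩)]
        exact congrArg y.get (Fin.ext rfl)
      · intro j _ hj
        rw [if_neg]
        intro hgj
        exact hj (hmg.injective (hgj.trans (hid ⟨n, h1⟩).symm))
      · intro h
        exact absurd (Finset.mem_univ _) h
    exact Nat.card_of_isEmpty

lemma qsCoeff_cons_cons_nil (a b : ℕ) (A B : List ℕ) : qsCoeff (a::A) (b::B) [] = 0 := by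
  rw [qsCoeff_def]
  haveI : IsEmpty {fg // QSP (a::A) (b::B) [] fg} :=
    ⟨fun z => (z.1.1 ⟨0, by simp⟩).elim0⟩
  exact Nat.card_of_isEmpty
/-! #### Shifting helpers -/

def predMap {n r : ℕ} (h : Fin n → Fin (r+1)) (H : ∀ i, h i ≠ 0) : Fin n → Fin r :=
  fun i => ⟨(h i).val - 1, by
    have h1 := (h i).isLt
    have h2 : (h i).val ≠ 0 := fun e => H i (Fin.ext e)
    omega⟩

lemma predMap_val {n r : ℕ} (h : Fin n → Fin (r+1)) (H : ∀ i, h i ≠ 0) (i : Fin n) :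
    (predMap h H i).val = (h i).val - 1 := rfl

lemma predMap_strictMono {n r : ℕ} {h : Fin n → Fin (r+1)} (hm : StrictMono h)
    (H : ∀ i, h i ≠ 0) : StrictMono (predMap h H) := by
  intro p q hpq
  have h3 := hm hpq
  have h2 : (h p).val ≠ 0 := fun e => H p (Fin.ext e)
  rw [Fin.lt_def] at h3 ⊢
  rw [predMap_val, predMap_val]
  omega

lemma predMap_eq_iff {n r : ℕ} {h : Fin n → Fin (r+1)} {H : ∀ i, h i ≠ 0} {i : Fin n}
    {s : Fin r} : predMap h H i = s ↔ h i = s.succ := by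
  rw [Fin.ext_iff, Fin.ext_iff]
  rw [predMap_val, Fin.val_succ]
  have h2 : (h i).val ≠ 0 := fun e => H i (Fin.ext e)
  omega

lemma g_ne_zero_of_monotone {n r : ℕ} {g : Fin (n+1) → Fin (r+1)} (hm : StrictMono g)
    (h0 : g 0 ≠ 0) : ∀ j, g j ≠ 0 := by
  intro j e
  exact h0 (Fin.le_zero_iff.mp (e ▸ hm.monotone (Fin.zero_le j)))

lemma sum_ite_single {n r : ℕ} (h : Fin n → Fin r) (hinj : Function.Injective h)
    (v : Fin n → ℕ) (i0 : Fin n) (s : Fin r) (hi0 : h i0 = s) :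
    (∑ i, if h i = s then v i else 0) = v i0 := by
  rw [Finset.sum_eq_single i0]
  · rw [if_pos hi0]
  · intro j _ hj
    rw [if_neg]
    intro e
    exact hj (hinj (e.trans hi0.symm))
  · intro hh
    exact absurd (Finset.mem_univ _) hh

lemma sum_ite_zero {n r : ℕ} (h : Fin n → Fin r) (v : Fin n → ℕ) (s : Fin r)
    (hnone : ∀ i, h i ≠ s) : (∑ i, if h i = s then v i else 0) = 0 :=
  Finset.sum_eq_zero fun i _ => if_neg (hnone i)

lemma cons_succ_strictMono {k r : ℕ} {f' : Fin k → Fin r} (h : StrictMono f') :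
    StrictMono (Fin.cons (0 : Fin (r+1)) (fun i => (f' i).succ) : Fin (k+1) → Fin (r+1)) := by
  intro p q hpq
  induction q using Fin.cases with
  | zero => exact absurd hpq (Fin.not_lt_zero p)
  | succ q' =>
    induction p using Fin.cases with
    | zero =>
      rw [Fin.cons_zero, Fin.cons_succ]
      exact Fin.succ_pos _
    | succ p' =>
      rw [Fin.cons_succ, Fin.cons_succ]
      exact Fin.succ_lt_succ_iff.mpr (h (by rwa [Fin.succ_lt_succ_iff] at hpq))

lemma succ_comp_strictMono {k r : ℕ} {g' : Fin k → Fin r} (h : StrictMono g') :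
    StrictMono (fun j => (g' j).succ : Fin k → Fin (r+1)) :=
  fun p q hpq => Fin.succ_lt_succ_iff.mpr (h hpq)
lemma card1 (a b c : ℕ) (A B C : List ℕ) :
    Nat.card {fg : (Fin (A.length+1) → Fin (C.length+1)) × (Fin (B.length+1) → Fin (C.length+1)) //
      QSP (a::A) (b::B) (c::C) fg ∧ fg.1 0 = 0 ∧ fg.2 0 ≠ 0}
    = if c = a then qsCoeff A (b::B) C else 0 := by
  rcases eq_or_ne c a with rfl | hca
  · rw [if_pos rfl, qsCoeff_def]
    have Hf : ∀ (z : {fg : (Fin (A.length+1) → Fin (C.length+1)) ×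
        (Fin (B.length+1) → Fin (C.length+1)) //
        QSP (c::A) (b::B) (c::C) fg ∧ fg.1 0 = 0 ∧ fg.2 0 ≠ 0}) (i : Fin A.length),
        z.1.1 i.succ ≠ 0 := by
      intro z i e
      exact (Fin.succ_ne_zero i) (z.2.1.1.injective (e.trans z.2.2.1.symm))
    have Hg : ∀ (z : {fg : (Fin (A.length+1) → Fin (C.length+1)) ×
        (Fin (B.length+1) → Fin (C.length+1)) //
        QSP (c::A) (b::B) (c::C) fg ∧ fg.1 0 = 0 ∧ fg.2 0 ≠ 0}) (j : Fin (B.length+1)),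
        z.1.2 j ≠ 0 := by
      intro z j
      exact g_ne_zero_of_monotone z.2.1.2.1 z.2.2.2 j
    refine Nat.card_congr (Equiv.ofBijective (fun z =>
      ⟨(predMap (fun i => z.1.1 i.succ) (Hf z), predMap z.1.2 (Hg z)), ?_⟩) ⟨?_, ?_⟩)
    · have hmf : StrictMono z.1.1 := z.2.1.1
      have hmg : StrictMono z.1.2 := z.2.1.2.1
      have hcov := z.2.1.2.2.1
      have hsum := z.2.1.2.2.2
      have hf0 : z.1.1 0 = 0 := z.2.2.1
      have hg0 : z.1.2 0 ≠ 0 := z.2.2.2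
      simp only [List.length_cons] at hcov hsum
      refine ⟨?_, ?_, ?_, ?_⟩
      · exact predMap_strictMono (fun p q h => hmf (by rwa [Fin.succ_lt_succ_iff])) (Hf z)
      · exact predMap_strictMono hmg (Hg z)
      · intro s
        rcases hcov s.succ with ⟨i, hi⟩ | ⟨j, hj⟩
        · have hi0 : i ≠ 0 := by
            intro e
            rw [e, hf0] at hi
            exact Fin.succ_ne_zero s hi.symm
          obtain ⟨i', rfl⟩ := Fin.eq_succ_of_ne_zero hi0
          exact Or.inl ⟨i', (predMap_eq_iff (h := fun i => z.1.1 i.succ)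
            (H := Hf z) (i := i') (s := s)).mpr hi⟩
        · exact Or.inr ⟨j, (predMap_eq_iff (h := z.1.2) (H := Hg z)
            (i := j) (s := s)).mpr hj⟩
      · show ∀ s : Fin C.length, C.get s =
          (∑ i : Fin A.length,
            if predMap (fun i => z.1.1 i.succ) (Hf z) i = s then A.get i else 0) +
          (∑ j : Fin (B.length+1),
            if predMap z.1.2 (Hg z) j = s then (b::B).get j else 0)
        intro s
        have h1 := hsum s.succ
        rw [Fin.sum_univ_succ] at h1
        rw [if_neg (show ¬ z.1.1 0 = s.succ from by
          rw [hf0]; exact (Fin.succ_ne_zero s).symm), zero_add] at h1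
        rw [show C.get s = (c::C).get s.succ from rfl, h1]
        congr 1
        · exact Finset.sum_congr rfl fun i _ => if_congr
            ((predMap_eq_iff (h := fun i => z.1.1 i.succ) (H := Hf z)).symm) rfl rfl
        · exact Finset.sum_congr rfl fun j _ => if_congr
            ((predMap_eq_iff (h := z.1.2) (H := Hg z)).symm) rfl rfl
    · -- injectivity
      intro z1 z2 h
      have h1 := congrArg (fun t => t.1.1) h
      have h2 := congrArg (fun t => t.1.2) h
      simp only [] at h1 h2
      apply Subtype.ext
      apply Prod.ext
      · funext p
        induction p using Fin.cases with
        | zero => rw [z1.2.2.1, z2.2.2.1]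
        | succ p' =>
          apply Fin.ext
          have hv := congrArg Fin.val (congrFun h1 p')
          rw [predMap_val, predMap_val] at hv
          have n1 : (z1.1.1 p'.succ).val ≠ 0 := fun e => Hf z1 p' (Fin.ext e)
          have n2 : (z2.1.1 p'.succ).val ≠ 0 := fun e => Hf z2 p' (Fin.ext e)
          omega
      · funext j
        apply Fin.ext
        have hv := congrArg Fin.val (congrFun h2 j)
        rw [predMap_val, predMap_val] at hv
        have n1 : (z1.1.2 j).val ≠ 0 := fun e => Hg z1 j (Fin.ext e)
        have n2 : (z2.1.2 j).val ≠ 0 := fun e => Hg z2 j (Fin.ext e)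
        omega
    · -- surjectivity
      rintro ⟨fg', hq'⟩
      obtain ⟨hmf', hmg', hcov', hsum'⟩ := hq'
      simp only [List.length_cons] at hcov' hsum'
      set F : Fin (A.length+1) → Fin (C.length+1) :=
        Fin.cons 0 (fun i => (fg'.1 i).succ) with hF
      set G : Fin (B.length+1) → Fin (C.length+1) := fun j => (fg'.2 j).succ with hG
      have hF0 : F 0 = 0 := Fin.cons_zero _ _
      have hFs : ∀ i : Fin A.length, F i.succ = (fg'.1 i).succ :=
        fun i => Fin.cons_succ _ _ i
      refine ⟨⟨(F, G), ⟨?_, ?_, ?_, ?_⟩, ?_, ?_⟩, ?_⟩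
      · show StrictMono F
        rw [hF]
        exact cons_succ_strictMono hmf'
      · show StrictMono G
        exact succ_comp_strictMono hmg'
      · show ∀ s : Fin (C.length+1), (∃ i, F i = s) ∨ (∃ j, G j = s)
        intro s
        induction s using Fin.cases with
        | zero => exact Or.inl ⟨0, hF0⟩
        | succ s' =>
          rcases hcov' s' with ⟨i, hi⟩ | ⟨j, hj⟩
          · exact Or.inl ⟨i.succ, by rw [hFs i]; exact congrArg Fin.succ hi⟩
          · exact Or.inr ⟨j, congrArg Fin.succ hj⟩
      · show ∀ s : Fin (C.length+1), (c::C).get s =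
          (∑ i : Fin (A.length+1), if F i = s then (c::A).get i else 0) +
          (∑ j : Fin (B.length+1), if G j = s then (b::B).get j else 0)
        intro s
        induction s using Fin.cases with
        | zero =>
          have ef : (∑ i : Fin (A.length+1), if F i = 0 then (c::A).get i else 0) = c := by
            rw [Fin.sum_univ_succ]
            rw [if_pos hF0]
            have hz : ∀ i : Fin A.length,
                (if F i.succ = 0 then (c::A).get i.succ else 0) = 0 := by
              intro i
              rw [hFs i]
              exact if_neg (Fin.succ_ne_zero _)
            rw [Finset.sum_congr rfl (fun i _ => hz i), Finset.sum_const_zero, add_zero]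
            simp
          have eg : (∑ j : Fin (B.length+1), if G j = 0 then (b::B).get j else 0) = 0 :=
            sum_ite_zero _ _ _ (fun j => Fin.succ_ne_zero _)
          rw [ef, eg, add_zero]
          simp
        | succ s' =>
          have h' := hsum' s'
          rw [show (c::C).get s'.succ = C.get s' from rfl, h']
          congr 1
          · rw [Fin.sum_univ_succ]
            rw [if_neg (show ¬ F 0 = s'.succ from by
              rw [hF0]; exact (Fin.succ_ne_zero s').symm), zero_add]
            refine Finset.sum_congr rfl fun i _ => ?_
            rw [hFs i]
            exact if_congr Fin.succ_inj.symm rfl rfl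
          · exact Finset.sum_congr rfl fun j _ => if_congr Fin.succ_inj.symm rfl rfl
      · exact hF0
      · show G 0 ≠ 0
        exact Fin.succ_ne_zero _
      · apply Subtype.ext
        apply Prod.ext
        · funext i
          apply Fin.ext
          show (F i.succ).val - 1 = (fg'.1 i).val
          rw [hFs i, Fin.val_succ]
          omega
        · funext j
          apply Fin.ext
          show (G j).val - 1 = (fg'.2 j).val
          rw [show G j = (fg'.2 j).succ from rfl, Fin.val_succ]
          omega
  · rw [if_neg hca]
    have : IsEmpty {fg : (Fin (A.length+1) → Fin (C.length+1)) ×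
        (Fin (B.length+1) → Fin (C.length+1)) //
        QSP (a::A) (b::B) (c::C) fg ∧ fg.1 0 = 0 ∧ fg.2 0 ≠ 0} := by
      refine ⟨fun z => hca ?_⟩
      obtain ⟨fg, hq, hf0, hg0⟩ := z
      obtain ⟨hmf, hmg, hcov, hsum⟩ := hq
      simp only [List.length_cons] at hsum
      have h0 := hsum 0
      have ef := sum_ite_single fg.1 hmf.injective (fun i => (a::A).get i) 0 0 hf0
      have eg := sum_ite_zero fg.2 (fun j => (b::B).get j) 0
        (g_ne_zero_of_monotone hmg hg0)
      rw [ef, eg, add_zero] at h0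
      simpa using h0
    exact Nat.card_of_isEmpty
lemma card3 (a b c : ℕ) (A B C : List ℕ) :
    Nat.card {fg : (Fin (A.length+1) → Fin (C.length+1)) × (Fin (B.length+1) → Fin (C.length+1)) //
      QSP (a::A) (b::B) (c::C) fg ∧ fg.1 0 = 0 ∧ fg.2 0 = 0}
    = if c = a + b then qsCoeff A B C else 0 := by
  rcases eq_or_ne c (a + b) with rfl | hca
  · rw [if_pos rfl, qsCoeff_def]
    have Hf : ∀ (z : {fg : (Fin (A.length+1) → Fin (C.length+1)) ×
        (Fin (B.length+1) → Fin (C.length+1)) //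
        QSP (a::A) (b::B) ((a+b)::C) fg ∧ fg.1 0 = 0 ∧ fg.2 0 = 0}) (i : Fin A.length),
        z.1.1 i.succ ≠ 0 := by
      intro z i e
      exact (Fin.succ_ne_zero i) (z.2.1.1.injective (e.trans z.2.2.1.symm))
    have Hg : ∀ (z : {fg : (Fin (A.length+1) → Fin (C.length+1)) ×
        (Fin (B.length+1) → Fin (C.length+1)) //
        QSP (a::A) (b::B) ((a+b)::C) fg ∧ fg.1 0 = 0 ∧ fg.2 0 = 0}) (j : Fin B.length),
        z.1.2 j.succ ≠ 0 := by
      intro z j e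
      exact (Fin.succ_ne_zero j) (z.2.1.2.1.injective (e.trans z.2.2.2.symm))
    refine Nat.card_congr (Equiv.ofBijective (fun z =>
      ⟨(predMap (fun i => z.1.1 i.succ) (Hf z), predMap (fun j => z.1.2 j.succ) (Hg z)),
        ?_⟩) ⟨?_, ?_⟩)
    · have hmf : StrictMono z.1.1 := z.2.1.1
      have hmg : StrictMono z.1.2 := z.2.1.2.1
      have hcov := z.2.1.2.2.1
      have hsum := z.2.1.2.2.2
      have hf0 : z.1.1 0 = 0 := z.2.2.1
      have hg0 : z.1.2 0 = 0 := z.2.2.2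
      simp only [List.length_cons] at hcov hsum
      refine ⟨?_, ?_, ?_, ?_⟩
      · exact predMap_strictMono (fun p q h => hmf (by rwa [Fin.succ_lt_succ_iff])) (Hf z)
      · exact predMap_strictMono (fun p q h => hmg (by rwa [Fin.succ_lt_succ_iff])) (Hg z)
      · intro s
        rcases hcov s.succ with ⟨i, hi⟩ | ⟨j, hj⟩
        · have hi0 : i ≠ 0 := by
            intro e
            rw [e, hf0] at hi
            exact Fin.succ_ne_zero s hi.symm
          obtain ⟨i', rfl⟩ := Fin.eq_succ_of_ne_zero hi0
          exact Or.inl ⟨i', (predMap_eq_iff (h := fun i => z.1.1 i.succ)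
            (H := Hf z) (i := i') (s := s)).mpr hi⟩
        · have hj0 : j ≠ 0 := by
            intro e
            rw [e, hg0] at hj
            exact Fin.succ_ne_zero s hj.symm
          obtain ⟨j', rfl⟩ := Fin.eq_succ_of_ne_zero hj0
          exact Or.inr ⟨j', (predMap_eq_iff (h := fun j => z.1.2 j.succ)
            (H := Hg z) (i := j') (s := s)).mpr hj⟩
      · show ∀ s : Fin C.length, C.get s =
          (∑ i : Fin A.length,
            if predMap (fun i => z.1.1 i.succ) (Hf z) i = s then A.get i else 0) +
          (∑ j : Fin B.length,
            if predMap (fun j => z.1.2 j.succ) (Hg z) j = s then B.get j else 0)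
        intro s
        have h1 := hsum s.succ
        rw [Fin.sum_univ_succ] at h1
        rw [if_neg (show ¬ z.1.1 0 = s.succ from by
          rw [hf0]; exact (Fin.succ_ne_zero s).symm), zero_add] at h1
        rw [Fin.sum_univ_succ (fun j => if z.1.2 j = s.succ then (b::B).get j else 0)] at h1
        rw [if_neg (show ¬ z.1.2 0 = s.succ from by
          rw [hg0]; exact (Fin.succ_ne_zero s).symm), zero_add] at h1
        rw [show C.get s = ((a+b)::C).get s.succ from rfl, h1]
        congr 1
        · exact Finset.sum_congr rfl fun i _ => if_congr
            ((predMap_eq_iff (h := fun i => z.1.1 i.succ) (H := Hf z)).symm) rfl rfl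
        · exact Finset.sum_congr rfl fun j _ => if_congr
            ((predMap_eq_iff (h := fun j => z.1.2 j.succ) (H := Hg z)).symm) rfl rfl
    · -- injectivity
      intro z1 z2 h
      have h1 := congrArg (fun t => t.1.1) h
      have h2 := congrArg (fun t => t.1.2) h
      simp only [] at h1 h2
      apply Subtype.ext
      apply Prod.ext
      · funext p
        induction p using Fin.cases with
        | zero => rw [z1.2.2.1, z2.2.2.1]
        | succ p' =>
          apply Fin.ext
          have hv := congrArg Fin.val (congrFun h1 p')
          rw [predMap_val, predMap_val] at hv
          have n1 : (z1.1.1 p'.succ).val ≠ 0 := fun e => Hf z1 p' (Fin.ext e)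
          have n2 : (z2.1.1 p'.succ).val ≠ 0 := fun e => Hf z2 p' (Fin.ext e)
          omega
      · funext p
        induction p using Fin.cases with
        | zero => rw [z1.2.2.2, z2.2.2.2]
        | succ p' =>
          apply Fin.ext
          have hv := congrArg Fin.val (congrFun h2 p')
          rw [predMap_val, predMap_val] at hv
          have n1 : (z1.1.2 p'.succ).val ≠ 0 := fun e => Hg z1 p' (Fin.ext e)
          have n2 : (z2.1.2 p'.succ).val ≠ 0 := fun e => Hg z2 p' (Fin.ext e)
          omega
    · -- surjectivity
      rintro ⟨fg', hq'⟩
      obtain ⟨hmf', hmg', hcov', hsum'⟩ := hq'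
      set F : Fin (A.length+1) → Fin (C.length+1) :=
        Fin.cons 0 (fun i => (fg'.1 i).succ) with hF
      set G : Fin (B.length+1) → Fin (C.length+1) :=
        Fin.cons 0 (fun j => (fg'.2 j).succ) with hG
      have hF0 : F 0 = 0 := Fin.cons_zero _ _
      have hG0 : G 0 = 0 := Fin.cons_zero _ _
      have hFs : ∀ i : Fin A.length, F i.succ = (fg'.1 i).succ :=
        fun i => Fin.cons_succ _ _ i
      have hGs : ∀ j : Fin B.length, G j.succ = (fg'.2 j).succ :=
        fun j => Fin.cons_succ _ _ j
      refine ⟨⟨(F, G), ⟨?_, ?_, ?_, ?_⟩, ?_, ?_⟩, ?_⟩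
      · show StrictMono F
        rw [hF]
        exact cons_succ_strictMono hmf'
      · show StrictMono G
        rw [hG]
        exact cons_succ_strictMono hmg'
      · show ∀ s : Fin (C.length+1), (∃ i, F i = s) ∨ (∃ j, G j = s)
        intro s
        induction s using Fin.cases with
        | zero => exact Or.inl ⟨0, hF0⟩
        | succ s' =>
          rcases hcov' s' with ⟨i, hi⟩ | ⟨j, hj⟩
          · exact Or.inl ⟨i.succ, by rw [hFs i]; exact congrArg Fin.succ hi⟩
          · exact Or.inr ⟨j.succ, by rw [hGs j]; exact congrArg Fin.succ hj⟩
      · show ∀ s : Fin (C.length+1), ((a+b)::C).get s =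
          (∑ i : Fin (A.length+1), if F i = s then (a::A).get i else 0) +
          (∑ j : Fin (B.length+1), if G j = s then (b::B).get j else 0)
        intro s
        induction s using Fin.cases with
        | zero =>
          have ef : (∑ i : Fin (A.length+1), if F i = 0 then (a::A).get i else 0) = a := by
            rw [Fin.sum_univ_succ]
            rw [if_pos hF0]
            have hz : ∀ i : Fin A.length,
                (if F i.succ = 0 then (a::A).get i.succ else 0) = 0 := by
              intro i
              rw [hFs i]
              exact if_neg (Fin.succ_ne_zero _)
            rw [Finset.sum_congr rfl (fun i _ => hz i), Finset.sum_const_zero, add_zero]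
            simp
          have eg : (∑ j : Fin (B.length+1), if G j = 0 then (b::B).get j else 0) = b := by
            rw [Fin.sum_univ_succ]
            rw [if_pos hG0]
            have hz : ∀ j : Fin B.length,
                (if G j.succ = 0 then (b::B).get j.succ else 0) = 0 := by
              intro j
              rw [hGs j]
              exact if_neg (Fin.succ_ne_zero _)
            rw [Finset.sum_congr rfl (fun j _ => hz j), Finset.sum_const_zero, add_zero]
            simp
          rw [ef, eg]
          simp
        | succ s' =>
          have h' := hsum' s'
          rw [show ((a+b)::C).get s'.succ = C.get s' from rfl, h']
          congr 1
          · rw [Fin.sum_univ_succ]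
            rw [if_neg (show ¬ F 0 = s'.succ from by
              rw [hF0]; exact (Fin.succ_ne_zero s').symm), zero_add]
            refine Finset.sum_congr rfl fun i _ => ?_
            rw [hFs i]
            exact if_congr Fin.succ_inj.symm rfl rfl
          · rw [Fin.sum_univ_succ]
            rw [if_neg (show ¬ G 0 = s'.succ from by
              rw [hG0]; exact (Fin.succ_ne_zero s').symm), zero_add]
            refine Finset.sum_congr rfl fun j _ => ?_
            rw [hGs j]
            exact if_congr Fin.succ_inj.symm rfl rfl
      · exact hF0
      · exact hG0
      · apply Subtype.ext
        apply Prod.ext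
        · funext i
          apply Fin.ext
          show (F i.succ).val - 1 = (fg'.1 i).val
          rw [hFs i, Fin.val_succ]
          omega
        · funext j
          apply Fin.ext
          show (G j.succ).val - 1 = (fg'.2 j).val
          rw [hGs j, Fin.val_succ]
          omega
  · rw [if_neg hca]
    have : IsEmpty {fg : (Fin (A.length+1) → Fin (C.length+1)) ×
        (Fin (B.length+1) → Fin (C.length+1)) //
        QSP (a::A) (b::B) (c::C) fg ∧ fg.1 0 = 0 ∧ fg.2 0 = 0} := by
      refine ⟨fun z => hca ?_⟩
      obtain ⟨fg, hq, hf0, hg0⟩ := z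
      obtain ⟨hmf, hmg, hcov, hsum⟩ := hq
      simp only [List.length_cons] at hsum
      have h0 := hsum 0
      have ef := sum_ite_single fg.1 hmf.injective (fun i => (a::A).get i) 0 0 hf0
      have eg := sum_ite_single fg.2 hmg.injective (fun j => (b::B).get j) 0 0 hg0
      rw [ef, eg] at h0
      simpa using h0
    exact Nat.card_of_isEmpty

lemma card2 (a b c : ℕ) (A B C : List ℕ) :
    Nat.card {fg : (Fin (A.length+1) → Fin (C.length+1)) × (Fin (B.length+1) → Fin (C.length+1)) //
      QSP (a::A) (b::B) (c::C) fg ∧ fg.1 0 ≠ 0 ∧ fg.2 0 = 0}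
    = if c = b then qsCoeff (a::A) B C else 0 := by
  have e : {fg : (Fin (A.length+1) → Fin (C.length+1)) × (Fin (B.length+1) → Fin (C.length+1)) //
      QSP (a::A) (b::B) (c::C) fg ∧ fg.1 0 ≠ 0 ∧ fg.2 0 = 0} ≃
      {fg : (Fin (B.length+1) → Fin (C.length+1)) × (Fin (A.length+1) → Fin (C.length+1)) //
      QSP (b::B) (a::A) (c::C) fg ∧ fg.1 0 = 0 ∧ fg.2 0 ≠ 0} :=
    { toFun := fun z => ⟨(z.1.2, z.1.1), ⟨z.2.1.2.1, z.2.1.1, fun s => (z.2.1.2.2.1 s).symm,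
        fun s => by rw [z.2.1.2.2.2 s]; ring⟩, z.2.2.2, z.2.2.1⟩,
      invFun := fun z => ⟨(z.1.2, z.1.1), ⟨z.2.1.2.1, z.2.1.1, fun s => (z.2.1.2.2.1 s).symm,
        fun s => by rw [z.2.1.2.2.2 s]; ring⟩, z.2.2.2, z.2.2.1⟩,
      left_inv := fun z => rfl,
      right_inv := fun z => rfl }
  rw [Nat.card_congr e, card1 b a c B A C]
  rcases eq_or_ne c b with rfl | hcb
  · rw [if_pos rfl, if_pos rfl, qsCoeff_comm]
  · rw [if_neg hcb, if_neg hcb]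

lemma qsCoeff_cons_cons (a b c : ℕ) (A B C : List ℕ) :
    qsCoeff (a::A) (b::B) (c::C)
      = (if c = a then qsCoeff A (b::B) C else 0) + (if c = b then qsCoeff (a::A) B C else 0) +
        (if c = a + b then qsCoeff A B C else 0) := by
  classical
  rw [← card1 a b c A B C, ← card2 a b c A B C, ← card3 a b c A B C]
  rw [show qsCoeff (a::A) (b::B) (c::C) = Nat.card {fg : (Fin (A.length+1) → Fin (C.length+1)) ×
      (Fin (B.length+1) → Fin (C.length+1)) // QSP (a::A) (b::B) (c::C) fg} from rfl]
  have key0 : ∀ fg : (Fin (A.length+1) → Fin (C.length+1)) ×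
      (Fin (B.length+1) → Fin (C.length+1)),
      QSP (a::A) (b::B) (c::C) fg → fg.1 0 = 0 ∨ fg.2 0 = 0 := by
    intro fg hp
    have hcov := hp.2.2.1
    simp only [List.length_cons] at hcov
    rcases hcov 0 with ⟨i, hi⟩ | ⟨j, hj⟩
    · left
      have h1 : fg.1 0 ≤ fg.1 i := hp.1.monotone (Fin.zero_le i)
      rw [hi] at h1
      exact Fin.le_zero_iff.mp h1
    · right
      have h1 : fg.2 0 ≤ fg.2 j := hp.2.1.monotone (Fin.zero_le j)
      rw [hj] at h1
      exact Fin.le_zero_iff.mp h1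
  have e : {fg : (Fin (A.length+1) → Fin (C.length+1)) ×
      (Fin (B.length+1) → Fin (C.length+1)) // QSP (a::A) (b::B) (c::C) fg} ≃
      ({fg : (Fin (A.length+1) → Fin (C.length+1)) × (Fin (B.length+1) → Fin (C.length+1)) //
        QSP (a::A) (b::B) (c::C) fg ∧ fg.1 0 = 0 ∧ fg.2 0 ≠ 0} ⊕
       ({fg : (Fin (A.length+1) → Fin (C.length+1)) × (Fin (B.length+1) → Fin (C.length+1)) //
        QSP (a::A) (b::B) (c::C) fg ∧ fg.1 0 ≠ 0 ∧ fg.2 0 = 0} ⊕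
        {fg : (Fin (A.length+1) → Fin (C.length+1)) × (Fin (B.length+1) → Fin (C.length+1)) //
        QSP (a::A) (b::B) (c::C) fg ∧ fg.1 0 = 0 ∧ fg.2 0 = 0})) := by
    refine (Equiv.subtypeEquivRight ?_).trans
      ((subtypeOrEquiv _ _ ?_).trans
        (Equiv.sumCongr (Equiv.refl _) (subtypeOrEquiv _ _ ?_)))
    · intro fg
      constructor
      · intro h
        by_cases h1 : fg.1 0 = 0 <;> by_cases h2 : fg.2 0 = 0
        · exact Or.inr (Or.inr ⟨h, h1, h2⟩)
        · exact Or.inl ⟨h, h1, h2⟩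
        · exact Or.inr (Or.inl ⟨h, h1, h2⟩)
        · rcases key0 fg h with h1' | h2'
          · exact absurd h1' h1
          · exact absurd h2' h2
      · rintro (⟨h,-⟩ | ⟨h,-⟩ | ⟨h,-⟩) <;> exact h
    · refine disjoint_pred fun fg h1 h2 => ?_
      rcases h2 with ⟨_, h2, _⟩ | ⟨_, _, h2⟩
      · exact h2 h1.2.1
      · exact h1.2.2 h2
    · refine disjoint_pred fun fg h1 h2 => ?_
      exact h1.2.1 h2.2.1
  rw [Nat.card_congr e, Nat.card_sum, Nat.card_sum]
  omega
lemma qsCoeff_eq_qsc : ∀ x y g : List ℕ, qsCoeff x y g = qsc x y g := by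
  intro x y g
  match x, y, g with
  | [], y, g => rw [qsCoeff_nil_left, qsc_nil_left]
  | a::A, [], g => rw [qsCoeff_comm, qsCoeff_nil_left, qsc_cons_nil]
  | a::A, b::B, [] => rw [qsCoeff_cons_cons_nil, qsc_cons_cons_nil]
  | a::A, b::B, c::C =>
    rw [qsCoeff_cons_cons, qsc_cons_cons, qsCoeff_eq_qsc A (b::B) C,
      qsCoeff_eq_qsc (a::A) B C, qsCoeff_eq_qsc A B C]
  termination_by x y _ => x.length + y.length
  decreasing_by all_goals (simp; try omega)
/-- for every `u ∈ U₀`, `φ_u` is multiplicative. -/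
theorem phiU_multiplicative (u : List (ℝ × Bool)) (hu : memU0 u) :
    ∀ α β : Comp,
      (∑' γ : Comp, (qsCoeff α.1 β.1 γ.1 : ℝ) * Mcirc u γ.1)
        = Mcirc u α.1 * Mcirc u β.1 := by
  intro α β
  rw [tsum_congr (fun γ : Comp => by rw [qsCoeff_eq_qsc] :
    ∀ γ : Comp, (qsCoeff α.1 β.1 γ.1 : ℝ) * Mcirc u γ.1
      = (qsc α.1 β.1 γ.1 : ℝ) * Mcirc u γ.1)]
  rw [tsum_qsc α.1 β.1 α.2 β.2 (Mcirc u)]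
  exact Qop_Mcirc u α.1 β.1 α.2 β.2

end GK
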